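/- Let P be a probability measure on a product space of independent Bernoulli(p) edge variables indexed by the edges of ℤ^d (nearest-neighbor), and let E, F be increasing events. Then P(E ∘ F) ≤ P(E)P(F), where E ∘ F denotes disjoint occurrence: the event that there exist disjoint edge sets I, J such that the configuration restricted to I certifies E and the configuration restricted to J certifies F. -/

import Mathlib

open MeasureTheory

/-- Nearest-neighbour edges of `ℤ^d`. -/
def Edge (d : ℕ) : Type :=
  {e : (Fin d → ℤ) × (Fin d → ℤ) // (∑ i, |e.1 i - e.2 i|) = 1}

/-- Percolation configurations: each edge is open (`true`) or closed (`false`). -/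
abbrev Config (d : ℕ) : Type := Edge d → Bool

/-- An event is increasing if it is stable under opening additional edges. -/
def IsIncreasingEvent {d : ℕ} (E : Set (Config d)) : Prop :=
  ∀ ω ω' : Config d, (∀ e, ω e = true → ω' e = true) → ω ∈ E → ω' ∈ E

/-- Disjoint occurrence `E ∘ F`: there exist disjoint edge sets `I, J` such that
the configuration restricted to `I` certifies `E` and the configuration
restricted to `J` certifies `F`. -/
def DisjOcc {d : ℕ} (E F : Set (Config d)) : Set (Config d) :=
  {ω | ∃ I J : Set (Edge d), Disjoint I J ∧
    (∀ ω' : Config d, (∀ e ∈ I, ω' e = ω e) → ω' ∈ E) ∧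
    (∀ ω' : Config d, (∀ e ∈ J, ω' e = ω e) → ω' ∈ F)}



namespace BKAux
open Finset

open Classical in
noncomputable def ind (P : Prop) : ℝ := if P then 1 else 0

lemma ind_nonneg (P : Prop) : 0 ≤ ind P := by
  unfold ind; split <;> norm_num

lemma ind_congr {P Q : Prop} (h : P ↔ Q) : ind P = ind Q := by
  unfold ind; split <;> split <;> tauto

lemma ind_true {P : Prop} (h : P) : ind P = 1 := by unfold ind; split <;> tauto
lemma ind_false {P : Prop} (h : ¬ P) : ind P = 0 := by unfold ind; split <;> tauto

lemma ind_and (P Q : Prop) : ind (P ∧ Q) = ind P * ind Q := by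
  unfold ind; by_cases hP : P <;> by_cases hQ : Q <;> simp [hP, hQ]

variable {ι : Type*} [DecidableEq ι]

noncomputable def cw (p q : ℝ) (S X : Finset ι) : ℝ := ∏ e ∈ S, if e ∈ X then p else q

variable {p q : ℝ}

lemma cw_nonneg (hp : 0 ≤ p) (hq : 0 ≤ q) (S X : Finset ι) : 0 ≤ cw p q S X :=
  Finset.prod_nonneg fun e _ => by split <;> assumption

lemma cw_insert {t : ι} {S : Finset ι} (ht : t ∉ S) (X : Finset ι) :
    cw p q (insert t S) X = (if t ∈ X then p else q) * cw p q S X :=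
  Finset.prod_insert ht

lemma cw_congr {S X Y : Finset ι} (h : ∀ e ∈ S, (e ∈ X ↔ e ∈ Y)) :
    cw p q S X = cw p q S Y :=
  Finset.prod_congr rfl fun e he => if_congr (h e he) rfl rfl

lemma cw_insert_notmem {t : ι} {S X : Finset ι} (ht : t ∉ S) :
    cw p q S (insert t X) = cw p q S X :=
  cw_congr fun e he => by
    constructor
    · intro h; rcases Finset.mem_insert.mp h with h | h
      · exact absurd (h ▸ he) ht
      · exact h
    · exact fun h => Finset.mem_insert_of_mem h

lemma sum_cw (hpq : p + q = 1) (S : Finset ι) :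
    ∑ X ∈ S.powerset, cw p q S X = 1 := by
  induction S using Finset.induction_on with
  | empty => simp [cw]
  | insert _ _ ht =>
    rename_i a S ih
    rw [Finset.sum_powerset_insert ht]
    have h1 : ∀ X ∈ S.powerset, cw p q (insert a S) X = q * cw p q S X := by
      intro X hX
      rw [cw_insert ht, if_neg (fun h => ht (Finset.mem_powerset.mp hX h))]
    have h2 : ∀ X ∈ S.powerset, cw p q (insert a S) (insert a X) = p * cw p q S X := by
      intro X hX
      rw [cw_insert ht, if_pos (Finset.mem_insert_self a X), cw_insert_notmem ht]
    rw [Finset.sum_congr rfl h1, Finset.sum_congr rfl h2, ← Finset.mul_sum, ← Finset.mul_sum,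
      ih, mul_one, mul_one, add_comm, hpq]


/-- The disjoint-occurrence hybrid event used in the finite van den Berg-Kesten induction. -/
def DDP (S : Finset ι) (A B : Finset ι → Prop) (R X Y : Finset ι) : Prop :=
  ∃ I J : Finset ι, A I ∧ B J ∧ I ⊆ X ∧ J ⊆ S ∧ (J ∩ (S \ R)) ⊆ X ∧ (J ∩ R) ⊆ Y ∧
    (I ∩ J ∩ (S \ R)) = ∅

variable {S : Finset ι} {A B : Finset ι → Prop}

lemma DDP_mono {R X Y X' Y' : Finset ι} (hX : X ⊆ X') (hY : Y ⊆ Y') :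
    DDP S A B R X Y → DDP S A B R X' Y' := by
  rintro ⟨I, J, hA, hB, h1, h2, h3, h4, h5⟩
  exact ⟨I, J, hA, hB, h1.trans hX, h2, h3.trans hX, h4.trans hY, h5⟩

lemma DDP_insert_Y {R X Y : Finset ι} {t : ι} (htR : t ∉ R) :
    DDP S A B R X (insert t Y) ↔ DDP S A B R X Y := by
  constructor
  · rintro ⟨I, J, hA, hB, h1, h2, h3, h4, h5⟩
    refine ⟨I, J, hA, hB, h1, h2, h3, fun x hx => ?_, h5⟩
    have hxR := Finset.mem_inter.mp hx
    rcases Finset.mem_insert.mp (h4 hx) with h | h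
    · exact absurd (h ▸ hxR.2) htR
    · exact h
  · exact DDP_mono (le_refl X) (Finset.subset_insert t Y)

lemma DDP_step1 {R X Y : Finset ι} {t : ι} (htR : t ∉ R) (htX : t ∉ X) :
    DDP S A B R X Y → DDP S A B (insert t R) X Y := by
  rintro ⟨I, J, hA, hB, h1, h2, h3, h4, h5⟩
  have htJ : t ∉ J := by
    intro hc
    exact htX (h3 (Finset.mem_inter.mpr ⟨hc, Finset.mem_sdiff.mpr ⟨h2 hc, htR⟩⟩))
  refine ⟨I, J, hA, hB, h1, h2, ?_, ?_, ?_⟩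
  · exact fun x hx => h3 (by
      have := Finset.mem_inter.mp hx
      have := Finset.mem_sdiff.mp this.2
      exact Finset.mem_inter.mpr ⟨(Finset.mem_inter.mp hx).1,
        Finset.mem_sdiff.mpr ⟨this.1, fun hxR => this.2 (Finset.mem_insert_of_mem hxR)⟩⟩)
  · intro x hx
    have hm := Finset.mem_inter.mp hx
    rcases Finset.mem_insert.mp hm.2 with h | h
    · exact absurd (h ▸ hm.1) htJ
    · exact h4 (Finset.mem_inter.mpr ⟨hm.1, h⟩)
  · apply Finset.eq_empty_of_forall_notMem
    intro x hx
    have hm := Finset.mem_inter.mp hx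
    have hs := Finset.mem_sdiff.mp hm.2
    have : x ∈ I ∩ J ∩ (S \ R) := Finset.mem_inter.mpr ⟨hm.1,
      Finset.mem_sdiff.mpr ⟨hs.1, fun h => hs.2 (Finset.mem_insert_of_mem h)⟩⟩
    simp [h5] at this

lemma DDP_step2 {R X Y : Finset ι} {t : ι} (htR : t ∉ R) (htX : t ∉ X) :
    DDP S A B R (insert t X) Y →
      DDP S A B (insert t R) X (insert t Y) ∨ DDP S A B (insert t R) (insert t X) Y := by
  rintro ⟨I, J, hA, hB, h1, h2, h3, h4, h5⟩
  by_cases htJ : t ∈ J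
  · -- then t ∉ I
    left
    have htI : t ∉ I := by
      intro hc
      have : t ∈ I ∩ J ∩ (S \ R) :=
        Finset.mem_inter.mpr ⟨Finset.mem_inter.mpr ⟨hc, htJ⟩,
          Finset.mem_sdiff.mpr ⟨h2 htJ, htR⟩⟩
      exact Finset.notMem_empty t (h5 ▸ this)
    refine ⟨I, J, hA, hB, ?_, h2, ?_, ?_, ?_⟩
    · intro x hx
      rcases Finset.mem_insert.mp (h1 hx) with h | h
      · exact absurd (h ▸ hx) htI
      · exact h
    · intro x hx
      have hm := Finset.mem_inter.mp hx
      have hs := Finset.mem_sdiff.mp hm.2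
      have hxt : x ≠ t := fun h => hs.2 (h ▸ Finset.mem_insert_self t R)
      have : x ∈ J ∩ (S \ R) := Finset.mem_inter.mpr ⟨hm.1,
        Finset.mem_sdiff.mpr ⟨hs.1, fun h => hs.2 (Finset.mem_insert_of_mem h)⟩⟩
      rcases Finset.mem_insert.mp (h3 this) with h | h
      · exact absurd h hxt
      · exact h
    · intro x hx
      have hm := Finset.mem_inter.mp hx
      rcases Finset.mem_insert.mp hm.2 with h | h
      · exact h ▸ Finset.mem_insert_self t Y
      · exact Finset.mem_insert_of_mem (h4 (Finset.mem_inter.mpr ⟨hm.1, h⟩))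
    · apply Finset.eq_empty_of_forall_notMem
      intro x hx
      have hm := Finset.mem_inter.mp hx
      have hs := Finset.mem_sdiff.mp hm.2
      have : x ∈ I ∩ J ∩ (S \ R) := Finset.mem_inter.mpr ⟨hm.1,
        Finset.mem_sdiff.mpr ⟨hs.1, fun h => hs.2 (Finset.mem_insert_of_mem h)⟩⟩
      exact Finset.notMem_empty x (h5 ▸ this)
  · right
    refine ⟨I, J, hA, hB, h1, h2, ?_, ?_, ?_⟩
    · intro x hx
      have hm := Finset.mem_inter.mp hx
      have hs := Finset.mem_sdiff.mp hm.2
      exact h3 (Finset.mem_inter.mpr ⟨hm.1,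
        Finset.mem_sdiff.mpr ⟨hs.1, fun h => hs.2 (Finset.mem_insert_of_mem h)⟩⟩)
    · intro x hx
      have hm := Finset.mem_inter.mp hx
      rcases Finset.mem_insert.mp hm.2 with h | h
      · exact absurd (h ▸ hm.1) htJ
      · exact h4 (Finset.mem_inter.mpr ⟨hm.1, h⟩)
    · apply Finset.eq_empty_of_forall_notMem
      intro x hx
      have hm := Finset.mem_inter.mp hx
      have hs := Finset.mem_sdiff.mp hm.2
      have : x ∈ I ∩ J ∩ (S \ R) := Finset.mem_inter.mpr ⟨hm.1,
        Finset.mem_sdiff.mpr ⟨hs.1, fun h => hs.2 (Finset.mem_insert_of_mem h)⟩⟩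
      exact Finset.notMem_empty x (h5 ▸ this)

lemma DDP_empty {X Y : Finset ι} (hX : X ⊆ S) :
    DDP S A B ∅ X Y ↔ ∃ I J : Finset ι, A I ∧ B J ∧ I ⊆ X ∧ J ⊆ X ∧ I ∩ J = ∅ := by
  constructor
  · rintro ⟨I, J, hA, hB, h1, h2, h3, h4, h5⟩
    refine ⟨I, J, hA, hB, h1, ?_, ?_⟩
    · intro x hx
      exact h3 (Finset.mem_inter.mpr ⟨hx, Finset.mem_sdiff.mpr ⟨h2 hx, Finset.notMem_empty x⟩⟩)
    · apply Finset.eq_empty_of_forall_notMem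
      intro x hx
      have hm := Finset.mem_inter.mp hx
      have : x ∈ I ∩ J ∩ (S \ ∅) := Finset.mem_inter.mpr ⟨hx,
        Finset.mem_sdiff.mpr ⟨h2 hm.2, Finset.notMem_empty x⟩⟩
      exact Finset.notMem_empty x (h5 ▸ this)
  · rintro ⟨I, J, hA, hB, h1, h2, h3⟩
    refine ⟨I, J, hA, hB, h1, h2.trans hX, fun x hx => h2 (Finset.mem_inter.mp hx).1,
      by simp, ?_⟩
    rw [h3, Finset.empty_inter]

lemma DDP_full (hA : ∀ ⦃I I' : Finset ι⦄, I ⊆ I' → A I → A I')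
    (hB : ∀ ⦃I I' : Finset ι⦄, I ⊆ I' → B I → B I') {X Y : Finset ι}
    (hY : Y ⊆ S) : DDP S A B S X Y ↔ A X ∧ B Y := by
  constructor
  · rintro ⟨I, J, hAI, hBJ, h1, h2, h3, h4, h5⟩
    refine ⟨hA h1 hAI, hB ?_ hBJ⟩
    intro x hx
    exact h4 (Finset.mem_inter.mpr ⟨hx, h2 hx⟩)
  · rintro ⟨hAX, hBY⟩
    refine ⟨X, Y, hAX, hBY, le_refl X, hY, ?_, ?_, ?_⟩
    · simp
    · intro x hx; exact (Finset.mem_inter.mp hx).1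
    · simp




variable {ι : Type*} [DecidableEq ι] {p q : ℝ} {S : Finset ι} {A B : Finset ι → Prop}

lemma four_ineq (hp : 0 ≤ p) (hq : 0 ≤ q) (hpq : p + q = 1)
    {F0 F1 G00 G01 G10 G11 : Prop}
    (h1 : F0 → G00) (h2 : F1 → G01 ∨ G10)
    (m1 : G00 → G01) (m2 : G00 → G10) (m3 : G01 → G11) (m4 : G10 → G11) :
    q * ind F0 + p * ind F1 ≤
      q * q * ind G00 + q * p * ind G01 + p * q * ind G10 + p * p * ind G11 := by
  have hq' : q = 1 - p := by linarith
  subst hq'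
  by_cases hF1 : F1
  · rw [ind_true hF1]
    rcases h2 hF1 with h01 | h10
    · rw [ind_true h01, ind_true (m3 h01)]
      by_cases hF0 : F0
      · rw [ind_true hF0, ind_true (h1 hF0), ind_true (m2 (h1 hF0))]; nlinarith
      · rw [ind_false hF0]
        nlinarith [mul_nonneg (mul_nonneg hq hq) (ind_nonneg G00),
          mul_nonneg (mul_nonneg hp hq) (ind_nonneg G10)]
    · rw [ind_true h10, ind_true (m4 h10)]
      by_cases hF0 : F0
      · rw [ind_true hF0, ind_true (h1 hF0), ind_true (m1 (h1 hF0))]; nlinarith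
      · rw [ind_false hF0]
        nlinarith [mul_nonneg (mul_nonneg hq hq) (ind_nonneg G00),
          mul_nonneg (mul_nonneg hq hp) (ind_nonneg G01)]
  · rw [ind_false hF1]
    by_cases hF0 : F0
    · rw [ind_true hF0, ind_true (h1 hF0), ind_true (m1 (h1 hF0)), ind_true (m2 (h1 hF0)),
        ind_true (m3 (m1 (h1 hF0)))]; nlinarith
    · rw [ind_false hF0]
      nlinarith [mul_nonneg (mul_nonneg hq hq) (ind_nonneg G00),
        mul_nonneg (mul_nonneg hq hp) (ind_nonneg G01),
        mul_nonneg (mul_nonneg hp hq) (ind_nonneg G10),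
        mul_nonneg (mul_nonneg hp hp) (ind_nonneg G11)]

noncomputable def MM (p q : ℝ) (S : Finset ι) (A B : Finset ι → Prop) (R : Finset ι) : ℝ :=
  ∑ X ∈ S.powerset, ∑ Y ∈ S.powerset, cw p q S X * cw p q S Y * ind (DDP S A B R X Y)

lemma MM_fiber {t : ι} {S' : Finset ι} (htS' : t ∉ S') (R : Finset ι) :
    MM p q (insert t S') A B R =
      ∑ X ∈ S'.powerset, ∑ Y ∈ S'.powerset,
        (cw p q (insert t S') X * cw p q (insert t S') Y * ind (DDP (insert t S') A B R X Y)
        + cw p q (insert t S') X * cw p q (insert t S') (insert t Y) *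
            ind (DDP (insert t S') A B R X (insert t Y))
        + cw p q (insert t S') (insert t X) * cw p q (insert t S') Y *
            ind (DDP (insert t S') A B R (insert t X) Y)
        + cw p q (insert t S') (insert t X) * cw p q (insert t S') (insert t Y) *
            ind (DDP (insert t S') A B R (insert t X) (insert t Y))) := by
  unfold MM
  simp only [Finset.sum_powerset_insert htS', Finset.sum_add_distrib]
  ring

lemma MM_step (hp : 0 ≤ p) (hq : 0 ≤ q) (hpq : p + q = 1) {t : ι} {R : Finset ι}
    (ht : t ∈ S) (htR : t ∉ R) : MM p q S A B R ≤ MM p q S A B (insert t R) := by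
  obtain ⟨S', htS', rfl⟩ : ∃ S', t ∉ S' ∧ insert t S' = S :=
    ⟨S.erase t, Finset.notMem_erase t S, Finset.insert_erase ht⟩
  have hq' : q = 1 - p := by linarith
  subst hq'
  rw [MM_fiber htS', MM_fiber htS']
  refine Finset.sum_le_sum fun X hX => Finset.sum_le_sum fun Y hY => ?_
  have hXS' := Finset.mem_powerset.mp hX
  have hYS' := Finset.mem_powerset.mp hY
  have htX : t ∉ X := fun h => htS' (hXS' h)
  have htY : t ∉ Y := fun h => htS' (hYS' h)
  have wX : cw p (1-p) (insert t S') X = (1-p) * cw p (1-p) S' X := by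
    rw [cw_insert htS', if_neg htX]
  have wY : cw p (1-p) (insert t S') Y = (1-p) * cw p (1-p) S' Y := by
    rw [cw_insert htS', if_neg htY]
  have wX' : cw p (1-p) (insert t S') (insert t X) = p * cw p (1-p) S' X := by
    rw [cw_insert htS', if_pos (Finset.mem_insert_self t X), cw_insert_notmem htS']
  have wY' : cw p (1-p) (insert t S') (insert t Y) = p * cw p (1-p) S' Y := by
    rw [cw_insert htS', if_pos (Finset.mem_insert_self t Y), cw_insert_notmem htS']
  have hiY : ∀ Z : Finset ι,
      ind (DDP (insert t S') A B R Z (insert t Y)) = ind (DDP (insert t S') A B R Z Y) :=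
    fun Z => ind_congr (DDP_insert_Y htR)
  rw [wX, wY, wX', wY', hiY, hiY]
  have hab : (0:ℝ) ≤ cw p (1-p) S' X * cw p (1-p) S' Y :=
    mul_nonneg (cw_nonneg hp hq _ _) (cw_nonneg hp hq _ _)
  have H := four_ineq hp hq hpq
    (F0 := DDP (insert t S') A B R X Y)
    (F1 := DDP (insert t S') A B R (insert t X) Y)
    (G00 := DDP (insert t S') A B (insert t R) X Y)
    (G01 := DDP (insert t S') A B (insert t R) X (insert t Y))
    (G10 := DDP (insert t S') A B (insert t R) (insert t X) Y)
    (G11 := DDP (insert t S') A B (insert t R) (insert t X) (insert t Y))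
    (DDP_step1 htR htX) (DDP_step2 htR htX)
    (DDP_mono (le_refl X) (Finset.subset_insert t Y))
    (DDP_mono (Finset.subset_insert t X) (le_refl Y))
    (DDP_mono (Finset.subset_insert t X) (le_refl (insert t Y)))
    (DDP_mono (le_refl (insert t X)) (Finset.subset_insert t Y))
  have H2 := mul_le_mul_of_nonneg_left H hab
  ring_nf at H2 ⊢
  linarith [H2]

lemma MM_le (hp : 0 ≤ p) (hq : 0 ≤ q) (hpq : p + q = 1) {R : Finset ι} (hRS : R ⊆ S) :
    MM p q S A B R ≤ MM p q S A B S := by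
  generalize hk : (S \ R).card = k
  induction k generalizing R with
  | zero =>
    have : S ⊆ R := Finset.sdiff_eq_empty_iff_subset.mp (Finset.card_eq_zero.mp hk)
    rw [Finset.Subset.antisymm hRS this]
  | succ k ih =>
    have hne : (S \ R).Nonempty := Finset.card_pos.mp (by omega)
    obtain ⟨t, htd⟩ := hne
    have ht := Finset.mem_sdiff.mp htd
    refine le_trans (MM_step hp hq hpq ht.1 ht.2)
      (ih (Finset.insert_subset ht.1 hRS) ?_)
    rw [Finset.sdiff_insert, Finset.card_erase_of_mem htd, hk]
    omega

lemma MM_empty (hpq : p + q = 1) :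
    MM p q S A B ∅ = ∑ X ∈ S.powerset, cw p q S X *
      ind (∃ I J : Finset ι, A I ∧ B J ∧ I ⊆ X ∧ J ⊆ X ∧ I ∩ J = ∅) := by
  unfold MM
  refine Finset.sum_congr rfl fun X hX => ?_
  have hXS := Finset.mem_powerset.mp hX
  have h : ∀ Y ∈ S.powerset, cw p q S X * cw p q S Y * ind (DDP S A B ∅ X Y)
      = (cw p q S X * ind (∃ I J : Finset ι, A I ∧ B J ∧ I ⊆ X ∧ J ⊆ X ∧ I ∩ J = ∅))
        * cw p q S Y := by
    intro Y _
    rw [ind_congr (DDP_empty hXS)]; ring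
  rw [Finset.sum_congr rfl h, ← Finset.mul_sum, sum_cw hpq, mul_one]

lemma MM_full (hA : ∀ ⦃I I' : Finset ι⦄, I ⊆ I' → A I → A I')
    (hB : ∀ ⦃I I' : Finset ι⦄, I ⊆ I' → B I → B I') :
    MM p q S A B S = (∑ X ∈ S.powerset, cw p q S X * ind (A X))
      * (∑ Y ∈ S.powerset, cw p q S Y * ind (B Y)) := by
  unfold MM
  rw [Finset.sum_mul_sum]
  refine Finset.sum_congr rfl fun X hX => Finset.sum_congr rfl fun Y hY => ?_
  rw [ind_congr (DDP_full hA hB (Finset.mem_powerset.mp hY)), ind_and]; ring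

theorem comb_bk (hp : 0 ≤ p) (hq : 0 ≤ q) (hpq : p + q = 1)
    (hA : ∀ ⦃I I' : Finset ι⦄, I ⊆ I' → A I → A I')
    (hB : ∀ ⦃I I' : Finset ι⦄, I ⊆ I' → B I → B I') (S : Finset ι) :
    ∑ X ∈ S.powerset, cw p q S X *
        ind (∃ I J : Finset ι, A I ∧ B J ∧ I ⊆ X ∧ J ⊆ X ∧ I ∩ J = ∅)
      ≤ (∑ X ∈ S.powerset, cw p q S X * ind (A X))
        * (∑ X ∈ S.powerset, cw p q S X * ind (B X)) := by
  rw [← MM_empty hpq, ← MM_full hA hB]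
  exact MM_le hp hq hpq (Finset.empty_subset S)


end BKAux

section Measure

variable {d : ℕ}

instance edgeDecEq (d : ℕ) : DecidableEq (Edge d) := by unfold Edge; infer_instance
instance edgeCountable (d : ℕ) : Countable (Edge d) := by unfold Edge; infer_instance

namespace BKAux

/-- Characteristic configuration of a finite edge set. -/
def indc (I : Finset (Edge d)) : Config d := fun e => decide (e ∈ I)

lemma indc_le {I : Finset (Edge d)} {ω : Config d} (h : ∀ e ∈ I, ω e = true) :
    ∀ e, indc I e = true → ω e = true := by
  intro e he
  exact h e (by simpa [indc] using he)

lemma indc_mono {I I' : Finset (Edge d)} (h : I ⊆ I') :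
    ∀ e, indc I e = true → indc I' e = true := by
  intro e he
  simp only [indc, decide_eq_true_eq] at *
  exact h he

/-- The open edges of `ω` within a finite window `T`. -/
def openIn (T : Finset (Edge d)) (ω : Config d) : Finset (Edge d) :=
  T.filter (fun e => ω e = true)

lemma mem_openIn {T : Finset (Edge d)} {ω : Config d} {e : Edge d} :
    e ∈ openIn T ω ↔ e ∈ T ∧ ω e = true := Finset.mem_filter

lemma openIn_mono {T T' : Finset (Edge d)} (h : T ⊆ T') (ω : Config d) :
    openIn T ω ⊆ openIn T' ω := by
  intro e he
  rw [mem_openIn] at *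
  exact ⟨h he.1, he.2⟩

/-- Finite-dimensional cylinder set. -/
def cylSet (T X : Finset (Edge d)) : Set (Config d) :=
  {ω : Config d | ∀ e ∈ T, ω e = decide (e ∈ X)}

/-- The event, over the window `T`, that the pattern of open edges satisfies `Φ`. -/
def EventOf (T : Finset (Edge d)) (Φ : Finset (Edge d) → Prop) : Set (Config d) :=
  {ω : Config d | Φ (openIn T ω)}

lemma mem_EventOf {T : Finset (Edge d)} {Φ : Finset (Edge d) → Prop} {ω : Config d} :
    ω ∈ EventOf T Φ ↔ Φ (openIn T ω) := Iff.rfl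

lemma openIn_eq_of_mem_cyl {T X : Finset (Edge d)} (hX : X ⊆ T) {ω : Config d}
    (hω : ω ∈ cylSet T X) : openIn T ω = X := by
  ext e
  rw [mem_openIn]
  constructor
  · rintro ⟨heT, htrue⟩
    have h2 := hω e heT
    rw [htrue] at h2
    exact of_decide_eq_true h2.symm
  · intro heX
    refine ⟨hX heX, ?_⟩
    rw [hω e (hX heX)]
    simp [heX]

lemma mem_cyl_openIn (T : Finset (Edge d)) (ω : Config d) : ω ∈ cylSet T (openIn T ω) := by
  intro e heT
  by_cases h : ω e = true
  · simp [mem_openIn, heT, h]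
  · have hf : ω e = false := by
      cases hh : ω e
      · rfl
      · exact absurd hh h
    simp [hf, mem_openIn, heT]

open Classical in
lemma EventOf_eq_biUnion (T : Finset (Edge d)) (Φ : Finset (Edge d) → Prop) :
    EventOf T Φ = ⋃ X ∈ T.powerset, (if Φ X then cylSet T X else ∅) := by
  ext ω
  simp only [Set.mem_iUnion, mem_EventOf]
  constructor
  · intro h
    refine ⟨openIn T ω, Finset.mem_powerset.mpr (Finset.filter_subset _ _), ?_⟩
    rw [if_pos h]
    exact mem_cyl_openIn T ω
  · rintro ⟨X, hX, hmem⟩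
    by_cases hΦ : Φ X
    · rw [if_pos hΦ] at hmem
      rwa [openIn_eq_of_mem_cyl (Finset.mem_powerset.mp hX) hmem]
    · rw [if_neg hΦ] at hmem
      exact absurd hmem (Set.notMem_empty ω)

lemma measurable_cylSet (T X : Finset (Edge d)) : MeasurableSet (cylSet T X) := by
  have h : cylSet T X = ⋂ e ∈ (T : Set (Edge d)), {ω : Config d | ω e = decide (e ∈ X)} := by
    ext ω; simp [cylSet]
  rw [h]
  refine MeasurableSet.biInter T.countable_toSet fun e _ => ?_
  have hm : Measurable (fun ω : Config d => ω e) := measurable_pi_apply e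
  exact hm (measurableSet_singleton (decide (e ∈ X)))

lemma cylSet_disjoint {T X Y : Finset (Edge d)} (hX : X ⊆ T) (hY : Y ⊆ T) (hne : X ≠ Y) :
    Disjoint (cylSet T X) (cylSet T Y) := by
  rw [Set.disjoint_left]
  intro ω hωX hωY
  exact hne ((openIn_eq_of_mem_cyl hX hωX).symm.trans (openIn_eq_of_mem_cyl hY hωY))

end BKAux

end Measure

namespace BKAux

variable {d : ℕ}

lemma prob_cylSet (P : Measure (Config d)) {p : ℝ}
    (hP : ∀ (S : Finset (Edge d)) (b : Edge d → Bool),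
      P {ω : Config d | ∀ e ∈ S, ω e = b e}
        = ∏ e ∈ S, ENNReal.ofReal (if b e then p else 1 - p))
    (hp0 : 0 ≤ p) (hp1 : p ≤ 1) (T X : Finset (Edge d)) :
    P (cylSet T X) = ENNReal.ofReal (cw p (1 - p) T X) := by
  have h := hP T (fun e => decide (e ∈ X))
  have hset : cylSet T X = {ω : Config d | ∀ e ∈ T, ω e = (fun e => decide (e ∈ X)) e} := rfl
  rw [hset, h, ← ENNReal.ofReal_prod_of_nonneg (fun e _ => by split <;> linarith)]
  congr 1
  refine Finset.prod_congr rfl fun e _ => ?_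
  simp only [decide_eq_true_eq]

open Classical in
lemma prob_EventOf (P : Measure (Config d)) {p : ℝ}
    (hP : ∀ (S : Finset (Edge d)) (b : Edge d → Bool),
      P {ω : Config d | ∀ e ∈ S, ω e = b e}
        = ∏ e ∈ S, ENNReal.ofReal (if b e then p else 1 - p))
    (hp0 : 0 ≤ p) (hp1 : p ≤ 1) (T : Finset (Edge d)) (Φ : Finset (Edge d) → Prop) :
    P (EventOf T Φ)
      = ENNReal.ofReal (∑ X ∈ T.powerset, cw p (1 - p) T X * ind (Φ X)) := by
  rw [EventOf_eq_biUnion]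
  rw [measure_biUnion_finset ?disj ?meas]
  case disj =>
    intro X hX Y hY hne
    simp only [Finset.mem_coe, Finset.mem_powerset] at hX hY
    show Disjoint (if Φ X then cylSet T X else ∅) (if Φ Y then cylSet T Y else ∅)
    split_ifs with h1 h2
    · exact cylSet_disjoint hX hY hne
    · exact Set.disjoint_empty _
    · exact Set.empty_disjoint _
    · exact Set.empty_disjoint _
  case meas =>
    intro X _
    by_cases hΦX : Φ X
    · rw [if_pos hΦX]; exact measurable_cylSet T X
    · rw [if_neg hΦX]; exact MeasurableSet.empty
  have hterm : ∀ X ∈ T.powerset, P (if Φ X then cylSet T X else ∅)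
      = ENNReal.ofReal (cw p (1 - p) T X * ind (Φ X)) := by
    intro X _
    by_cases hΦX : Φ X
    · rw [if_pos hΦX, ind_true hΦX, mul_one, prob_cylSet P hP hp0 hp1]
    · rw [if_neg hΦX, ind_false hΦX, mul_zero, measure_empty, ENNReal.ofReal_zero]
  rw [Finset.sum_congr rfl hterm,
    ← ENNReal.ofReal_sum_of_nonneg (fun X _ =>
      mul_nonneg (cw_nonneg hp0 (by linarith) T X) (ind_nonneg _))]

/-- Predicate: the characteristic configuration of `X` lies in `U`. -/
def PhiA (U : Set (Config d)) (X : Finset (Edge d)) : Prop := indc X ∈ U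

/-- Predicate: `X` contains disjoint witnesses for `U` and `V`. -/
def PhiD (U V : Set (Config d)) (X : Finset (Edge d)) : Prop :=
  ∃ I J : Finset (Edge d), PhiA U I ∧ PhiA V J ∧ I ⊆ X ∧ J ⊆ X ∧ I ∩ J = ∅

lemma PhiA_up {U : Set (Config d)} (hU : IsIncreasingEvent U) :
    ∀ ⦃I I' : Finset (Edge d)⦄, I ⊆ I' → PhiA U I → PhiA U I' :=
  fun I I' h hI => hU (indc I) (indc I') (indc_mono h) hI

lemma EventOf_D_le (P : Measure (Config d)) {p : ℝ}
    (hP : ∀ (S : Finset (Edge d)) (b : Edge d → Bool),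
      P {ω : Config d | ∀ e ∈ S, ω e = b e}
        = ∏ e ∈ S, ENNReal.ofReal (if b e then p else 1 - p))
    (hp0 : 0 ≤ p) (hp1 : p ≤ 1) {U V : Set (Config d)}
    (hUinc : IsIncreasingEvent U) (hVinc : IsIncreasingEvent V) (T : Finset (Edge d)) :
    P (EventOf T (PhiD U V)) ≤ P (EventOf T (PhiA U)) * P (EventOf T (PhiA V)) := by
  rw [prob_EventOf P hP hp0 hp1, prob_EventOf P hP hp0 hp1, prob_EventOf P hP hp0 hp1]
  have hnn : ∀ (Ψ : Finset (Edge d) → Prop),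
      0 ≤ ∑ X ∈ T.powerset, cw p (1 - p) T X * ind (Ψ X) :=
    fun Ψ => Finset.sum_nonneg fun X _ =>
      mul_nonneg (cw_nonneg hp0 (by linarith) T X) (ind_nonneg _)
  rw [← ENNReal.ofReal_mul (hnn _)]
  apply ENNReal.ofReal_le_ofReal
  have := comb_bk (p := p) (q := 1 - p) (A := PhiA U) (B := PhiA V) hp0 (by linarith)
    (by ring) (PhiA_up hUinc) (PhiA_up hVinc) T
  exact this

lemma EventOf_A_subset {U : Set (Config d)} (hUinc : IsIncreasingEvent U)
    (T : Finset (Edge d)) : EventOf T (PhiA U) ⊆ U := by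
  intro ω hω
  refine hUinc (indc (openIn T ω)) ω ?_ hω
  exact indc_le fun e he => (mem_openIn.mp he).2

lemma EventOf_D_mono {U V : Set (Config d)} {T T' : Finset (Edge d)} (h : T ⊆ T') :
    EventOf T (PhiD U V) ⊆ EventOf T' (PhiD U V) := by
  rintro ω ⟨I, J, hI, hJ, hIX, hJX, hIJ⟩
  exact ⟨I, J, hI, hJ, hIX.trans (openIn_mono h ω), hJX.trans (openIn_mono h ω), hIJ⟩

/-- The largest increasing subset of a set. -/
def incCore (U : Set (Config d)) : Set (Config d) :=
  {ω | ∀ τ : Config d, (∀ e, ω e = true → τ e = true) → τ ∈ U}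

lemma incCore_subset (U : Set (Config d)) : incCore U ⊆ U :=
  fun ω hω => hω ω (fun _ h => h)

lemma subset_incCore {E U : Set (Config d)} (hE : IsIncreasingEvent E) (h : E ⊆ U) :
    E ⊆ incCore U :=
  fun ω hω τ hτ => h (hE ω τ hτ hω)

lemma incCore_increasing (U : Set (Config d)) : IsIncreasingEvent (incCore U) :=
  fun ω ω' h hω τ hτ => hω τ (fun e he => hτ e (h e he))

lemma incCore_isOpen {U : Set (Config d)} (hU : IsOpen U) : IsOpen (incCore U) := by
  classical
  rw [isOpen_iff_mem_nhds]
  intro ω hω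
  -- the up-set of ω is compact and contained in U
  set K : Set (Config d) := {τ | ∀ e, ω e = true → τ e = true} with hK
  have hKU : K ⊆ U := fun τ hτ => hω τ hτ
  have hKclosed : IsClosed K := by
    have : K = ⋂ (e : Edge d), {τ : Config d | ω e = true → τ e = true} := by
      ext τ; simp [hK]
    rw [this]
    refine isClosed_iInter fun e => ?_
    by_cases h : ω e = true
    · have : {τ : Config d | ω e = true → τ e = true}
          = (fun τ : Config d => τ e) ⁻¹' {true} := by
        ext τ; simp [h]
      rw [this]
      exact (isClosed_discrete _).preimage (continuous_apply e)
    · have : {τ : Config d | ω e = true → τ e = true} = Set.univ := by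
        ext τ; simp [h]
      rw [this]; exact isClosed_univ
  have hKcpt : IsCompact K := hKclosed.isCompact
  -- choose a finite certificate for each point of K
  have h1 : ∀ τ : Config d, ∃ Tf : Finset (Edge d),
      τ ∈ K → {σ : Config d | ∀ e ∈ Tf, σ e = τ e} ⊆ U := by
    intro τ
    by_cases hτ : τ ∈ K
    · obtain ⟨Tf, u, hu, hsub⟩ := isOpen_pi_iff.mp hU τ (hKU hτ)
      refine ⟨Tf, fun _ => fun σ hσ => hsub ?_⟩
      rw [Set.mem_pi]
      intro i hi
      rw [hσ i hi]
      exact (hu i hi).2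
    · exact ⟨∅, fun h => absurd h hτ⟩
  choose Tf hTf using h1
  -- compactness: finitely many certificates suffice
  have hcov : K ⊆ ⋃ τ : Config d, (if τ ∈ K then {σ : Config d | ∀ e ∈ Tf τ, σ e = τ e} else ∅) := by
    intro τ hτ
    refine Set.mem_iUnion.mpr ⟨τ, ?_⟩
    rw [if_pos hτ]
    exact fun e _ => rfl
  have hopen : ∀ τ : Config d,
      IsOpen (if τ ∈ K then {σ : Config d | ∀ e ∈ Tf τ, σ e = τ e} else ∅) := by
    intro τ
    split
    · have : {σ : Config d | ∀ e ∈ Tf τ, σ e = τ e}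
          = Set.pi (↑(Tf τ)) (fun e => {τ e}) := by
        ext σ; simp [Set.mem_pi]
      rw [this]
      exact isOpen_set_pi (Tf τ).finite_toSet (fun e _ => isOpen_discrete _)
    · exact isOpen_empty
  obtain ⟨tfin, htfin⟩ := hKcpt.elim_finite_subcover _ hopen hcov
  set T : Finset (Edge d) := tfin.biUnion Tf with hT
  -- the cylinder around ω on T is inside incCore U
  have hsub : {σ : Config d | ∀ e ∈ T, σ e = ω e} ⊆ incCore U := by
    intro σ hσ τ' hτ'
    -- ρ := τ' ∨ ω lies in K
    set ρ : Config d := fun e => τ' e || ω e with hρ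
    have hρK : ρ ∈ K := fun e he => by simp [hρ, he]
    obtain ⟨x, hx, hρx⟩ := Set.mem_iUnion₂.mp (htfin hρK)
    by_cases hxK : x ∈ K
    · rw [if_pos hxK] at hρx
      have hτ'x : τ' ∈ {σ : Config d | ∀ e ∈ Tf x, σ e = x e} := by
        intro e he
        have heT : e ∈ T := Finset.mem_biUnion.mpr ⟨x, hx, he⟩
        have hρe : ρ e = x e := hρx e he
        by_cases hωe : ω e = true
        · have hσe : σ e = true := (hσ e heT).trans hωe
          have : τ' e = true := hτ' e hσe
          rw [← hρe, hρ]; simp [this]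
        · have hωf : ω e = false := by
            cases hh : ω e
            · rfl
            · exact absurd hh hωe
          rw [← hρe]
          simp [hρ, hωf]
      exact hTf x hxK hτ'x
    · rw [if_neg hxK] at hρx
      exact absurd hρx (Set.notMem_empty ρ)
  refine Filter.mem_of_superset ?_ hsub
  have : IsOpen {σ : Config d | ∀ e ∈ T, σ e = ω e} := by
    have h2 : {σ : Config d | ∀ e ∈ T, σ e = ω e} = Set.pi (↑T) (fun e => {ω e}) := by
      ext σ; simp [Set.mem_pi]
    rw [h2]
    exact isOpen_set_pi T.finite_toSet (fun e _ => isOpen_discrete _)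
  exact this.mem_nhds (fun e _ => rfl)

end BKAux

namespace BKAux

variable {d : ℕ}

lemma disjocc_mono {E F U V : Set (Config d)} (hEU : E ⊆ U) (hFV : F ⊆ V) :
    DisjOcc E F ⊆ DisjOcc U V := by
  rintro ω ⟨I, J, hIJ, hIc, hJc⟩
  exact ⟨I, J, hIJ, fun ω' h => hEU (hIc ω' h), fun ω' h => hFV (hJc ω' h)⟩

open Classical in
lemma certificate_finite {U : Set (Config d)} (hU : IsOpen U) {ω : Config d}
    {I : Set (Edge d)}
    (hcert : ∀ ω' : Config d, (∀ e ∈ I, ω' e = ω e) → ω' ∈ U) :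
    ∃ I' : Finset (Edge d), (∀ e ∈ I', e ∈ I ∧ ω e = true) ∧ indc I' ∈ U := by
  set χ : Config d := fun e => if e ∈ I ∧ ω e = true then true else false with hχ
  have hχmem : ∀ e, χ e = true ↔ (e ∈ I ∧ ω e = true) := by
    intro e
    by_cases h : e ∈ I ∧ ω e = true <;> simp [hχ, h]
  have hχU : χ ∈ U := by
    refine hcert χ fun e he => ?_
    by_cases h : ω e = true
    · rw [h, (hχmem e).mpr ⟨he, h⟩]
    · have hf : ω e = false := by
        cases hh : ω e
        · rfl
        · exact absurd hh h
      rw [hf]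
      cases hc : χ e
      · rfl
      · exact absurd ((hχmem e).mp hc).2 h
  obtain ⟨T₁, u, hu, hsub⟩ := isOpen_pi_iff.mp hU χ hχU
  refine ⟨T₁.filter (fun e => χ e = true), ?_, ?_⟩
  · intro e he
    rw [Finset.mem_filter] at he
    exact (hχmem e).mp he.2
  · apply hsub
    rw [Set.mem_pi]
    intro i hi
    have hiT : i ∈ T₁ := hi
    have heq : indc (T₁.filter (fun e => χ e = true)) i = χ i := by
      cases hc : χ i
      · simp [indc, Finset.mem_filter, hc]
      · simp [indc, Finset.mem_filter, hiT, hc]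
    rw [heq]
    exact (hu i hiT).2

lemma disjOcc_subset_iUnion {U V : Set (Config d)} (hU : IsOpen U) (hV : IsOpen V) :
    DisjOcc U V ⊆ ⋃ T : Finset (Edge d), EventOf T (PhiD U V) := by
  rintro ω ⟨I, J, hIJ, hIc, hJc⟩
  obtain ⟨I', hI', hI'U⟩ := certificate_finite hU hIc
  obtain ⟨J', hJ', hJ'V⟩ := certificate_finite hV hJc
  refine Set.mem_iUnion.mpr ⟨I' ∪ J', ?_⟩
  rw [mem_EventOf]
  refine ⟨I', J', hI'U, hJ'V, ?_, ?_, ?_⟩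
  · intro e he
    exact mem_openIn.mpr ⟨Finset.mem_union_left _ he, (hI' e he).2⟩
  · intro e he
    exact mem_openIn.mpr ⟨Finset.mem_union_right _ he, (hJ' e he).2⟩
  · apply Finset.eq_empty_of_forall_notMem
    intro e he
    rw [Finset.mem_inter] at he
    exact Set.disjoint_left.mp hIJ (hI' e he.1).1 (hJ' e he.2).1

end BKAux

open BKAux in
/-- The van den Berg–Kesten inequality: for the Bernoulli(p) product measure `P`
on the edges of `ℤ^d` (characterized by its values on finite cylinders) and
increasing measurable events `E, F`, one has `P(E ∘ F) ≤ P(E) P(F)`. -/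
theorem stmt_9 (d : ℕ) (p : ℝ) (hp0 : 0 ≤ p) (hp1 : p ≤ 1)
    (P : Measure (Config d)) [IsProbabilityMeasure P]
    (hP : ∀ (S : Finset (Edge d)) (b : Edge d → Bool),
      P {ω : Config d | ∀ e ∈ S, ω e = b e}
        = ∏ e ∈ S, ENNReal.ofReal (if b e then p else 1 - p))
    (E F : Set (Config d)) (hE : MeasurableSet E) (hF : MeasurableSet F)
    (hEinc : IsIncreasingEvent E) (hFinc : IsIncreasingEvent F) :
    P (DisjOcc E F) ≤ P E * P F := by
  classical
  refine ENNReal.le_of_forall_pos_le_add fun ε hε _ => ?_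
  set δ : ENNReal := min 1 ((ε : ENNReal) / 3) with hδdef
  have hδ0 : δ ≠ 0 := by
    have hε3 : (ε : ENNReal) / 3 ≠ 0 :=
      ENNReal.div_ne_zero.mpr ⟨by simpa using hε.ne', by norm_num⟩
    rw [hδdef]
    exact (lt_min zero_lt_one (pos_iff_ne_zero.mpr hε3)).ne'
  have hδ1 : δ ≤ 1 := min_le_left _ _
  have hδε : δ ≤ (ε : ENNReal) / 3 := min_le_right _ _
  -- outer approximation by open increasing sets
  have hElt : P E < P E + δ := ENNReal.lt_add_right (measure_ne_top P E) hδ0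
  have hFlt : P F < P F + δ := ENNReal.lt_add_right (measure_ne_top P F) hδ0
  obtain ⟨U₀, hEU₀, hU₀o, hU₀lt⟩ := Set.exists_isOpen_lt_of_lt E _ hElt
  obtain ⟨V₀, hFV₀, hV₀o, hV₀lt⟩ := Set.exists_isOpen_lt_of_lt F _ hFlt
  set U : Set (Config d) := incCore U₀ with hUdef
  set V : Set (Config d) := incCore V₀ with hVdef
  have hUo : IsOpen U := incCore_isOpen hU₀o
  have hVo : IsOpen V := incCore_isOpen hV₀o
  have hUinc : IsIncreasingEvent U := incCore_increasing U₀
  have hVinc : IsIncreasingEvent V := incCore_increasing V₀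
  have hEU : E ⊆ U := subset_incCore hEinc hEU₀
  have hFV : F ⊆ V := subset_incCore hFinc hFV₀
  have hPU : P U ≤ P E + δ := le_trans (measure_mono (incCore_subset U₀)) hU₀lt.le
  have hPV : P V ≤ P F + δ := le_trans (measure_mono (incCore_subset V₀)) hV₀lt.le
  -- the directed union of finite-window disjoint-occurrence events
  have hdir : Directed (· ⊆ ·) (fun T : Finset (Edge d) => EventOf T (PhiD U V)) := by
    intro T₁ T₂
    exact ⟨T₁ ∪ T₂, EventOf_D_mono Finset.subset_union_left,
      EventOf_D_mono Finset.subset_union_right⟩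
  have hchain : P (DisjOcc E F) ≤ (P E + δ) * (P F + δ) := by
    calc P (DisjOcc E F) ≤ P (DisjOcc U V) := measure_mono (disjocc_mono hEU hFV)
      _ ≤ P (⋃ T : Finset (Edge d), EventOf T (PhiD U V)) :=
          measure_mono (disjOcc_subset_iUnion hUo hVo)
      _ = ⨆ T : Finset (Edge d), P (EventOf T (PhiD U V)) := Directed.measure_iUnion hdir
      _ ≤ (P E + δ) * (P F + δ) := by
          refine iSup_le fun T => ?_
          refine le_trans (EventOf_D_le P hP hp0 hp1 hUinc hVinc T) ?_
          exact mul_le_mul' (le_trans (measure_mono (EventOf_A_subset hUinc T)) hPU)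
            (le_trans (measure_mono (EventOf_A_subset hVinc T)) hPV)
  refine le_trans hchain ?_
  have hexp : (P E + δ) * (P F + δ) = P E * P F + (P E * δ + δ * P F + δ * δ) := by ring
  rw [hexp]
  refine add_le_add_right ?_ (P E * P F)
  have h1 : P E * δ ≤ δ := by
    calc P E * δ ≤ 1 * δ := mul_le_mul_left prob_le_one δ
      _ = δ := one_mul δ
  have h2 : δ * P F ≤ δ := by
    calc δ * P F ≤ δ * 1 := mul_le_mul_right prob_le_one δ
      _ = δ := mul_one δ
  have h3 : δ * δ ≤ δ := by
    calc δ * δ ≤ 1 * δ := mul_le_mul_left hδ1 δ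
      _ = δ := one_mul δ
  calc P E * δ + δ * P F + δ * δ ≤ δ + δ + δ := add_le_add (add_le_add h1 h2) h3
    _ ≤ (ε : ENNReal) / 3 + (ε : ENNReal) / 3 + (ε : ENNReal) / 3 :=
        add_le_add (add_le_add hδε hδε) hδε
    _ = (ε : ENNReal) / 3 * 3 := by ring
    _ = (ε : ENNReal) := ENNReal.div_mul_cancel (by norm_num) (by norm_num)
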